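/- Let P be a totally ordered set and V a nonzero pointwise finite dimensional persistence module indexed by P. Then there exists an internal direct sum decomposition V = U ⊕ W such that U is an interval module. -/

import Mathlib

universe u v w w'

/-- A persistence module indexed by a poset `P`, over a field `k`. -/
structure PersMod (k : Type u) [Field k] (P : Type v) [PartialOrder P] :
    Type (max u v (w + 1)) where
  space : P → Type w
  [acg : ∀ x, AddCommGroup (space x)]
  [mod : ∀ x, Module k (space x)]
  map : ∀ {x y : P}, x ≤ y → (space x →ₗ[k] space y)
  map_id : ∀ x : P, map (le_refl x) = LinearMap.id
  map_comp : ∀ {x y z : P} (hxy : x ≤ y) (hyz : y ≤ z),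
    (map hyz).comp (map hxy) = map (hxy.trans hyz)

attribute [instance] PersMod.acg PersMod.mod

variable (k : Type u) [Field k] {P : Type v} [PartialOrder P]

/-- A morphism of persistence modules (a natural transformation). -/
structure PersHom (V : PersMod.{u, v, w} k P) (W : PersMod.{u, v, w'} k P) where
  app : ∀ x : P, V.space x →ₗ[k] W.space x
  natural : ∀ {x y : P} (h : x ≤ y) (v : V.space x),
    app y (V.map h v) = W.map h (app x v)

/-- An isomorphism of persistence modules. -/
structure PersIso (V : PersMod.{u, v, w} k P) (W : PersMod.{u, v, w'} k P) where
  app : ∀ x : P, V.space x ≃ₗ[k] W.space x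
  natural : ∀ {x y : P} (h : x ≤ y) (v : V.space x),
    app y (V.map h v) = W.map h (app x v)

/-- A subset `I` of a poset is convex if `x ≤ y ≤ z`, `x ∈ I`, `z ∈ I` imply `y ∈ I`. -/
def IsConvexIn (I : Set P) : Prop :=
  ∀ ⦃x y z : P⦄, x ∈ I → z ∈ I → x ≤ y → y ≤ z → y ∈ I

/-- A subset `I` of a poset is connected if any two points of `I` are joined by a
zigzag path inside `I`. -/
def IsConnectedIn (I : Set P) : Prop :=
  ∀ x ∈ I, ∀ z ∈ I, ∃ (n : ℕ) (c : ℕ → P), (∀ i ≤ n, c i ∈ I) ∧ c 0 = x ∧ c n = z ∧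
    ∀ i < n, c i ≤ c (i + 1) ∨ c (i + 1) ≤ c i

/-- An interval in a poset: nonempty, convex and connected. -/
def IsPosetInterval (I : Set P) : Prop :=
  I.Nonempty ∧ IsConvexIn I ∧ IsConnectedIn I

open Classical in
/-- The subspace of `k` used as the value of the constant module at `x`. -/
noncomputable def constSub (I : Set P) (x : P) : Submodule k k :=
  if x ∈ I then ⊤ else ⊥

open Classical in
/-- The structure map of the constant module. -/
noncomputable def constMap (I : Set P) (x y : P) :
    constSub k I x →ₗ[k] constSub k I y :=
  LinearMap.codRestrict (constSub k I y)
    ((if y ∈ I then (LinearMap.id : k →ₗ[k] k) else 0).comp (constSub k I x).subtype)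
    (fun c => by
      by_cases hy : y ∈ I
      · simp [constSub, hy]
      · simp only [hy, if_false, LinearMap.zero_comp, LinearMap.zero_apply]
        exact Submodule.zero_mem _)

open Classical in
/-- The constant (interval) module `M(I)` attached to a convex subset `I`. -/
noncomputable def constMod (I : Set P) (hI : IsConvexIn I) : PersMod.{u, v, u} k P where
  space x := constSub k I x
  map {x y} _ := constMap k I x y
  map_id := fun x => by
    ext c
    by_cases hx : x ∈ I
    · simp [constMap, hx]
    · have hc : (c : k) = 0 := by
        have : (c : k) ∈ (⊥ : Submodule k k) :=
          Eq.mp (congrArg (fun S => (c : k) ∈ S) (if_neg hx : constSub k I x = ⊥)) c.2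
        exact (Submodule.mem_bot k).1 this
      simp [constMap, hx, hc]
  map_comp := fun {x y z} hxy hyz => by
    ext c
    by_cases hz : z ∈ I
    · by_cases hy : y ∈ I
      · simp [constMap, hy, hz]
      · have hx : x ∉ I := fun hx => hy (hI hx hz hxy hyz)
        have hc : (c : k) = 0 := by
          have : (c : k) ∈ (⊥ : Submodule k k) :=
            Eq.mp (congrArg (fun S => (c : k) ∈ S) (if_neg hx : constSub k I x = ⊥)) c.2
          exact (Submodule.mem_bot k).1 this
        simp [constMap, hy, hz, hc]
    · simp [constMap, hz]

/-- A submodule of a persistence module: a family of subspaces preserved by the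
structure maps. -/
structure PersSubmod (V : PersMod.{u, v, w} k P) where
  carrier : ∀ x : P, Submodule k (V.space x)
  mapLe : ∀ {x y : P} (h : x ≤ y), ∀ v ∈ carrier x, V.map h v ∈ carrier y

/-- A submodule of a persistence module, viewed as a persistence module in its own
right. -/
def PersSubmod.toPersMod {V : PersMod.{u, v, w} k P} (U : PersSubmod k V) :
    PersMod.{u, v, w} k P where
  space x := U.carrier x
  map {x y} h := (V.map h).restrict (U.mapLe h)
  map_id := fun x => by
    ext c
    simp [LinearMap.restrict_apply, V.map_id]
  map_comp := fun {x y z} hxy hyz => by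
    ext c
    have := LinearMap.congr_fun (V.map_comp hxy hyz) (c : V.space x)
    simpa [LinearMap.restrict_apply] using this

/-- A persistence module is an interval module if it is isomorphic to a constant
module `M(I)` for some interval `I`. -/
def IsIntervalModule (V : PersMod.{u, v, w} k P) : Prop :=
  ∃ (I : Set P) (hI : IsPosetInterval I), Nonempty (PersIso k V (constMod k I hI.2.1))

/-- `A` is an internal direct sum decomposition of `V`:
at each point the subspaces are independent and span everything. -/
def IsDecomp (V : PersMod.{u, v, w} k P) (A : Set (PersSubmod k V)) : Prop :=
  ∀ x : P, iSupIndep (fun U : A => (U : PersSubmod k V).carrier x) ∧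
    ⨆ U : A, (U : PersSubmod k V).carrier x = ⊤

/-- An interval decomposition of `V`. -/
def IsIntervalDecomp (V : PersMod.{u, v, w} k P) (A : Set (PersSubmod k V)) : Prop :=
  IsDecomp k V A ∧ ∀ U ∈ A, IsIntervalModule k U.toPersMod

/-- `V` has an interval decomposition. -/
def HasIntervalDecomp (V : PersMod.{u, v, w} k P) : Prop :=
  ∃ A : Set (PersSubmod k V), IsIntervalDecomp k V A

section AuxiliaryLemmas
namespace IntervalAux

universe u₁ v₁ w₁

variable {k : Type u₁} [Field k]

lemma mem_mk'_bot {M : Type w₁} [AddCommGroup M] [Module k M] (v x : M) :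
    x ∈ AffineSubspace.mk' v (⊥ : Submodule k M) ↔ x = v := by
  rw [AffineSubspace.mem_mk']
  simp [vsub_eq_sub, sub_eq_zero]

lemma affine_le_of_le_of_direction_le {M : Type w₁} [AddCommGroup M] [Module k M]
    {A B : AffineSubspace k M} (h : A ≤ B) (hne : (A : Set M).Nonempty)
    (hd : B.direction ≤ A.direction) : B ≤ A := by
  obtain ⟨a, ha⟩ := hne
  intro b hb
  have h2 : b -ᵥ a ∈ A.direction := hd (AffineSubspace.vsub_mem_direction hb (h ha))
  simpa using AffineSubspace.vadd_mem_of_mem_direction h2 ha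

lemma chain_affine_has_min {M : Type w₁} [AddCommGroup M] [Module k M] [FiniteDimensional k M]
    (S : Set (AffineSubspace k M)) (hS : S.Nonempty)
    (hne : ∀ A ∈ S, (A : Set M).Nonempty)
    (hchain : ∀ A ∈ S, ∀ B ∈ S, A ≤ B ∨ B ≤ A) :
    ∃ A₀ ∈ S, ∀ A ∈ S, A₀ ≤ A := by
  have hwf : WellFoundedLT (Submodule k M) := inferInstance
  obtain ⟨d, ⟨A₀, hA₀S, hA₀d⟩, hmin⟩ :=
    hwf.wf.has_min (AffineSubspace.direction '' S) (hS.image _)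
  refine ⟨A₀, hA₀S, fun A hA => ?_⟩
  rcases hchain A₀ hA₀S A hA with h | h
  · exact h
  · have hd : A.direction ≤ A₀.direction := AffineSubspace.direction_le h
    have hnotlt : ¬ A.direction < d := hmin _ ⟨A, hA, rfl⟩
    rw [hA₀d] at hd
    have heq : A.direction = d := by
      rcases lt_or_eq_of_le hd with hlt | he
      · exact absurd hlt hnotlt
      · exact he
    exact affine_le_of_le_of_direction_le h (hne A hA) (by rw [hA₀d, heq])

/-- Inverse limits of coherent systems of nonempty affine subspaces of finite
dimensional vector spaces over a totally ordered index set are nonempty. -/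
lemma invLimit {Q : Type v₁} [LinearOrder Q]
    (E : Q → Type w₁) [∀ q, AddCommGroup (E q)] [∀ q, Module k (E q)]
    [∀ q, FiniteDimensional k (E q)]
    (T : ∀ a b : Q, a ≤ b → (E b →ₗ[k] E a))
    (Tid : ∀ q (x : E q), T q q le_rfl x = x)
    (Tcomp : ∀ a b c (hab : a ≤ b) (hbc : b ≤ c) (x : E c),
      T a b hab (T b c hbc x) = T a c (hab.trans hbc) x)
    (F : ∀ q, AffineSubspace k (E q))
    (Fne : ∀ q, (F q : Set (E q)).Nonempty)
    (Fmap : ∀ a b (h : a ≤ b), ∀ x ∈ F b, T a b h x ∈ F a) :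
    ∃ s : ∀ q, E q, (∀ q, s q ∈ F q) ∧ ∀ a b (h : a ≤ b), T a b h (s b) = s a := by
  classical
  -- images
  set Img : ∀ a b : Q, a ≤ b → AffineSubspace k (E a) :=
    fun a b h => (F b).map (T a b h).toAffineMap with hImg
  have ImgNe : ∀ a b (h : a ≤ b), (Img a b h : Set (E a)).Nonempty := by
    intro a b h
    obtain ⟨x, hx⟩ := Fne b
    exact ⟨T a b h x, AffineSubspace.mem_map.2 ⟨x, hx, rfl⟩⟩
  have ImgMono : ∀ a b c (hab : a ≤ b) (hbc : b ≤ c),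
      Img a c (hab.trans hbc) ≤ Img a b hab := by
    intro a b c hab hbc x hx
    obtain ⟨w, hw, rfl⟩ := AffineSubspace.mem_map.1 hx
    exact AffineSubspace.mem_map.2 ⟨T b c hbc w, Fmap b c hbc w hw, Tcomp a b c hab hbc w⟩
  have ImgRefl : ∀ q, Img q q le_rfl = F q := by
    intro q
    ext x
    simp only [hImg, AffineSubspace.mem_map]
    constructor
    · rintro ⟨w, hw, rfl⟩
      simpa [Tid] using hw
    · intro hx
      exact ⟨x, hx, Tid q x⟩
  -- eventual images G
  have hG : ∀ q : Q, ∃ A₀ : AffineSubspace k (E q),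
      (∃ b : Q, ∃ h : q ≤ b, A₀ = Img q b h) ∧ ∀ b (h : q ≤ b), A₀ ≤ Img q b h := by
    intro q
    obtain ⟨A₀, hA₀, hmin⟩ := chain_affine_has_min
      {A | ∃ b : Q, ∃ h : q ≤ b, A = Img q b h}
      ⟨F q, q, le_rfl, (ImgRefl q).symm⟩
      (by rintro A ⟨b, h, rfl⟩; exact ImgNe q b h)
      (by
        rintro A ⟨b, hb, rfl⟩ B ⟨c, hc, rfl⟩
        rcases le_total b c with h | h
        · right
          have := ImgMono q b c hb h
          simpa using this
        · left
          have := ImgMono q c b hc h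
          simpa using this)
    refine ⟨A₀, hA₀, fun b h => ?_⟩
    exact hmin _ ⟨b, h, rfl⟩
  choose G hGmem hGle using hG
  have hGne : ∀ q, (G q : Set (E q)).Nonempty := by
    intro q
    obtain ⟨b, h, hEq⟩ := hGmem q
    rw [hEq]
    exact ImgNe q b h
  have hGsubF : ∀ q, ∀ x ∈ G q, x ∈ F q := by
    intro q x hx
    have := hGle q q le_rfl
    rw [ImgRefl q] at this
    exact this hx
  have hGmap : ∀ a b (h : a ≤ b), ∀ x ∈ G b, T a b h x ∈ G a := by
    intro a b h x hx
    obtain ⟨r₀, hr₀, hGa⟩ := hGmem a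
    rw [hGa]
    rcases le_total b r₀ with hbr | hrb
    · have hx' : x ∈ Img b r₀ hbr := hGle b r₀ hbr hx
      obtain ⟨w, hw, rfl⟩ := AffineSubspace.mem_map.1 hx'
      exact AffineSubspace.mem_map.2 ⟨w, hw, by simpa using (Tcomp a b r₀ h hbr w).symm⟩
    · have hx' : x ∈ F b := hGsubF b x hx
      have hw : T r₀ b hrb x ∈ F r₀ := Fmap r₀ b hrb x hx'
      refine AffineSubspace.mem_map.2 ⟨T r₀ b hrb x, hw, ?_⟩
      simpa using Tcomp a r₀ b hr₀ hrb x
  have hGsurj : ∀ a b (h : a ≤ b), ∀ x ∈ G a, ∃ y ∈ G b, T a b h y = x := by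
    intro a b h x hx
    set Fib : AffineSubspace k (E b) :=
      AffineSubspace.comap (T a b h).toAffineMap (AffineSubspace.mk' x ⊥) with hFib
    have hFibmem : ∀ y : E b, y ∈ Fib ↔ T a b h y = x := by
      intro y
      rw [hFib, AffineSubspace.mem_comap]
      exact mem_mk'_bot x _
    obtain ⟨C₀, hC₀, hCmin⟩ := chain_affine_has_min
      {A : AffineSubspace k (E b) | ∃ r : Q, ∃ hr : b ≤ r, A = Fib ⊓ Img b r hr}
      ⟨Fib ⊓ Img b b le_rfl, b, le_rfl, rfl⟩
      (by
        rintro A ⟨r, hr, rfl⟩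
        have hx' : x ∈ Img a r (h.trans hr) := hGle a r (h.trans hr) hx
        obtain ⟨w, hw, hwx⟩ := AffineSubspace.mem_map.1 hx'
        refine ⟨T b r hr w, (hFibmem _).2 ?_, AffineSubspace.mem_map.2 ⟨w, hw, rfl⟩⟩
        rw [Tcomp a b r h hr w]
        simpa using hwx)
      (by
        rintro A ⟨r, hr, rfl⟩ B ⟨r', hr', rfl⟩
        rcases le_total r r' with hh | hh
        · right
          exact inf_le_inf_left _ (by simpa using ImgMono b r r' hr hh)
        · left
          exact inf_le_inf_left _ (by simpa using ImgMono b r' r hr' hh))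
    obtain ⟨r₁, hr₁, hC₀eq⟩ := hC₀
    have hC₀ne : (C₀ : Set (E b)).Nonempty := by
      -- C₀ is one of the family members, each nonempty (same proof as above)
      rw [hC₀eq]
      have hx' : x ∈ Img a r₁ (h.trans hr₁) := hGle a r₁ (h.trans hr₁) hx
      obtain ⟨w, hw, hwx⟩ := AffineSubspace.mem_map.1 hx'
      refine ⟨T b r₁ hr₁ w, ?_⟩
      refine (AffineSubspace.mem_inf_iff _ _ _).mpr
        ⟨(hFibmem _).2 ?_, AffineSubspace.mem_map.2 ⟨w, hw, rfl⟩⟩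
      rw [Tcomp a b r₁ h hr₁ w]
      simpa using hwx
    obtain ⟨y, hy⟩ := hC₀ne
    have hyall : ∀ r (hr : b ≤ r), y ∈ Img b r hr := by
      intro r hr
      have := hCmin (Fib ⊓ Img b r hr) ⟨r, hr, rfl⟩ hy
      exact ((AffineSubspace.mem_inf_iff _ _ _).mp this).2
    have hyfib : T a b h y = x := by
      have := hy
      rw [hC₀eq] at this
      exact (hFibmem y).1 ((AffineSubspace.mem_inf_iff _ _ _).mp this).1
    refine ⟨y, ?_, hyfib⟩
    obtain ⟨r₂, hr₂, hGb⟩ := hGmem b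
    rw [hGb]
    exact hyall r₂ hr₂
  -- Zorn's lemma on partial coherent sections
  let 𝒞 : Set (Set (Σ q : Q, E q)) :=
    {s | (∀ p ∈ s, Sigma.snd p ∈ G p.1) ∧
         (∀ (a b : Q) (x : E a) (y : E b) (h : a ≤ b),
            (⟨a, x⟩ : Σ q, E q) ∈ s → (⟨b, y⟩ : Σ q, E q) ∈ s → T a b h y = x) ∧
         (∀ (a b : Q) (y : E b), a ≤ b → (⟨b, y⟩ : Σ q, E q) ∈ s →
            ∃ x : E a, (⟨a, x⟩ : Σ q, E q) ∈ s)}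
  have hchains : ∀ c ⊆ 𝒞, IsChain (fun x1 x2 => x1 ⊆ x2) c → c.Nonempty →
      ∃ ub ∈ 𝒞, ∀ s ∈ c, s ⊆ ub := by
    intro c hc hchain hcne
    refine ⟨⋃₀ c, ⟨?_, ?_, ?_⟩, fun s hs => Set.subset_sUnion_of_mem hs⟩
    · rintro p ⟨s, hs, hps⟩
      exact (hc hs).1 p hps
    · rintro a b x y h ⟨s1, hs1, hxs⟩ ⟨s2, hs2, hys⟩
      rcases hchain.total hs1 hs2 with hss | hss
      · exact (hc hs2).2.1 a b x y h (hss hxs) hys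
      · exact (hc hs1).2.1 a b x y h hxs (hss hys)
    · rintro a b y h ⟨s1, hs1, hys⟩
      obtain ⟨x, hx⟩ := (hc hs1).2.2 a b y h hys
      exact ⟨x, s1, hs1, hx⟩
  obtain ⟨m, -, hmem𝒞, hmax⟩ := zorn_subset_nonempty 𝒞 hchains ∅
    ⟨by rintro p ⟨⟩, by rintro a b x y h ⟨⟩, by rintro a b y h ⟨⟩⟩
  obtain ⟨hm1, hm2, hm3⟩ := hmem𝒞
  have huniq : ∀ (a : Q) (x y : E a),
      (⟨a, x⟩ : Σ q, E q) ∈ m → (⟨a, y⟩ : Σ q, E q) ∈ m → x = y := by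
    intro a x y hx hy
    have := hm2 a a y x le_rfl hy hx
    rw [Tid] at this
    exact this
  set dom : Set Q := {a | ∃ x : E a, (⟨a, x⟩ : Σ q, E q) ∈ m} with hdomdef
  have hdom : ∀ q : Q, q ∈ dom := by
    intro q
    by_contra hq
    have hdomle : ∀ a ∈ dom, a ≤ q := by
      intro a ha
      rcases le_total a q with h | h
      · exact h
      · obtain ⟨x, hx⟩ := ha
        obtain ⟨y, hy⟩ := hm3 q a x h hx
        exact absurd ⟨y, hy⟩ hq
    have hxq : ∃ xq : E q, xq ∈ G q ∧
        ∀ (a : Q) (x : E a), (⟨a, x⟩ : Σ q, E q) ∈ m →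
          ∀ h : a ≤ q, T a q h xq = x := by
      by_cases hd : dom.Nonempty
      · -- use a minimal fiber
        obtain ⟨a₀, ha₀⟩ := hd
        obtain ⟨x₀, hx₀⟩ := ha₀
        have hCne : ∀ (a : Q) (x : E a), (⟨a, x⟩ : Σ q, E q) ∈ m →
            ∀ h : a ≤ q, ((AffineSubspace.comap (T a q h).toAffineMap
              (AffineSubspace.mk' x ⊥) ⊓ G q : AffineSubspace k (E q)) :
                Set (E q)).Nonempty := by
          intro a x hx h
          obtain ⟨y, hyG, hyT⟩ := hGsurj a q h x (hm1 _ hx)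
          refine ⟨y, (AffineSubspace.mem_inf_iff _ _ _).2 ⟨?_, hyG⟩⟩
          rw [AffineSubspace.mem_comap]
          exact (mem_mk'_bot x _).2 hyT
        obtain ⟨C₀, hC₀mem, hCmin⟩ := chain_affine_has_min
          {A : AffineSubspace k (E q) | ∃ (a : Q) (x : E a)
            (hx : (⟨a, x⟩ : Σ q, E q) ∈ m) (h : a ≤ q),
            A = AffineSubspace.comap (T a q h).toAffineMap
              (AffineSubspace.mk' x ⊥) ⊓ G q}
          ⟨_, a₀, x₀, hx₀, hdomle a₀ ⟨x₀, hx₀⟩, rfl⟩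
          (by
            rintro A ⟨a, x, hx, h, rfl⟩
            exact hCne a x hx h)
          (by
            rintro A ⟨a, x, hx, h, rfl⟩ B ⟨a', x', hx', h', rfl⟩
            have key : ∀ (b b' : Q) (z : E b) (z' : E b')
                (hz : (⟨b, z⟩ : Σ q, E q) ∈ m) (hz' : (⟨b', z'⟩ : Σ q, E q) ∈ m)
                (hb : b ≤ q) (hb' : b' ≤ q) (hbb : b ≤ b'),
                (AffineSubspace.comap (T b' q hb').toAffineMap
                  (AffineSubspace.mk' z' ⊥) ⊓ G q : AffineSubspace k (E q)) ≤
                AffineSubspace.comap (T b q hb).toAffineMap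
                  (AffineSubspace.mk' z ⊥) ⊓ G q := by
              intro b b' z z' hz hz' hb hb' hbb
              intro t ht
              obtain ⟨ht1, ht2⟩ := (AffineSubspace.mem_inf_iff _ _ _).1 ht
              rw [AffineSubspace.mem_comap, mem_mk'_bot] at ht1
              refine (AffineSubspace.mem_inf_iff _ _ _).2 ⟨?_, ht2⟩
              rw [AffineSubspace.mem_comap, mem_mk'_bot]
              have ht1' : T b' q hb' t = z' := ht1
              show T b q hb t = z
              have : T b q hb t = T b b' hbb (T b' q hb' t) := (Tcomp _ _ _ _ _ _).symm
              rw [this, ht1']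
              exact hm2 b b' z z' hbb hz hz'
            rcases le_total a a' with hh | hh
            · right; exact key a a' x x' hx hx' h h' hh
            · left; exact key a' a x' x hx' hx h' h hh)
        obtain ⟨a₁, x₁, hx₁, h₁, hC₀eq⟩ := hC₀mem
        have hC₀ne : (C₀ : Set (E q)).Nonempty := by
          rw [hC₀eq]; exact hCne a₁ x₁ hx₁ h₁
        obtain ⟨t, ht⟩ := hC₀ne
        have htall : ∀ (a : Q) (x : E a), (⟨a, x⟩ : Σ q, E q) ∈ m →
            ∀ h : a ≤ q, T a q h t = x := by
          intro a x hx h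
          have := hCmin _ ⟨a, x, hx, h, rfl⟩ ht
          obtain ⟨h1, -⟩ := (AffineSubspace.mem_inf_iff _ _ _).1 this
          rw [AffineSubspace.mem_comap, mem_mk'_bot] at h1
          exact h1
        have htG : t ∈ G q := by
          have := ht
          rw [hC₀eq] at this
          exact ((AffineSubspace.mem_inf_iff _ _ _).1 this).2
        exact ⟨t, htG, htall⟩
      · obtain ⟨t, ht⟩ := hGne q
        refine ⟨t, ht, fun a x hx h => absurd ⟨x, hx⟩ (fun hha => hd ⟨a, hha⟩)⟩
    obtain ⟨xq, hxqG, hxqval⟩ := hxq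
    set m' : Set (Σ q : Q, E q) :=
      m ∪ {p : Σ q : Q, E q | ∃ h : p.1 ≤ q, p.2 = T p.1 q h xq} with hm'def
    have hnew : ∀ (a : Q) (x : E a) (h : a ≤ q),
        (⟨a, T a q h xq⟩ : Σ q, E q) ∈ m' := by
      intro a x h
      exact Or.inr ⟨h, rfl⟩
    have hm'𝒞 : m' ∈ 𝒞 := by
      refine ⟨?_, ?_, ?_⟩
      · rintro p (hp | ⟨h, hp⟩)
        · exact hm1 p hp
        · rw [hp]; exact hGmap p.1 q h xq hxqG
      · rintro a b x y h (hx | ⟨haq, hx⟩) (hy | ⟨hbq, hy⟩)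
        · exact hm2 a b x y h hx hy
        · simp only at hbq hy
          rw [hy, Tcomp a b q h hbq]
          exact hxqval a x hx (h.trans hbq)
        · simp only at haq hx
          obtain ⟨x', hx'⟩ := hm3 a b y h hy
          have h1 : T a b h y = x' := hm2 a b x' y h hx' hy
          have h2 : T a q haq xq = x' := hxqval a x' hx' haq
          rw [h1, ← h2, hx]
        · simp only at haq hx hbq hy
          rw [hx, hy, Tcomp a b q h hbq]
      · rintro a b y h (hy | ⟨hbq, hy⟩)
        · exact (hm3 a b y h hy).imp (fun x hx => Or.inl hx)
        · simp only at hbq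
          exact ⟨T a q (h.trans hbq) xq, Or.inr ⟨h.trans hbq, rfl⟩⟩
    have hsub : m ⊆ m' := Set.subset_union_left
    have : m' ⊆ m := hmax hm'𝒞 hsub
    have hqm : (⟨q, xq⟩ : Σ q, E q) ∈ m' := Or.inr ⟨le_rfl, (Tid q xq).symm⟩
    exact hq ⟨xq, this hqm⟩
  choose sval hsval using hdom
  refine ⟨sval, fun q => hGsubF q _ (hm1 _ (hsval q)), fun a b h => ?_⟩
  exact hm2 a b (sval a) (sval b) h (hsval a) (hsval b)


universe u₂ w₂ w₂'

variable {k : Type u₂} [Field k]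

/-- A functional killing the kernel of a map factors through it. -/
lemma exists_comp_eq {M : Type w₂} {N : Type w₂₂'} [AddCommGroup M] [Module k M]
    [AddCommGroup N] [Module k N] (TT : M →ₗ[k] N) (f : M →ₗ[k] k)
    (hf : ∀ x ∈ LinearMap.ker TT, f x = 0) :
    ∃ g : N →ₗ[k] k, g.comp TT = f := by
  have hle : LinearMap.ker TT ≤ LinearMap.ker f := fun x hx => hf x hx
  let f₂ : (M ⧸ LinearMap.ker TT) →ₗ[k] k := Submodule.liftQ _ f hle
  let e := TT.quotKerEquivRange
  let f₁ : LinearMap.range TT →ₗ[k] k := f₂.comp (e.symm : LinearMap.range TT →ₗ[k] _)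
  obtain ⟨C, hC⟩ := Submodule.exists_isCompl (LinearMap.range TT)
  let π := Submodule.linearProjOfIsCompl _ _ hC
  refine ⟨f₁.comp π, ?_⟩
  ext x
  simp only [LinearMap.comp_apply]
  have h1 : π (TT x) = ⟨TT x, LinearMap.mem_range_self TT x⟩ :=
    Submodule.linearProjOfIsCompl_apply_left hC ⟨TT x, LinearMap.mem_range_self TT x⟩
  rw [h1]
  have h2 : (⟨TT x, LinearMap.mem_range_self TT x⟩ : LinearMap.range TT) =
      e (Submodule.Quotient.mk x) := rfl
  rw [h2]
  simp only [f₁, LinearMap.comp_apply, LinearEquiv.coe_coe, LinearEquiv.symm_apply_apply]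
  rfl

/-- A vector outside a subspace admits a functional equal to 1 on it, killing the
subspace. -/
lemma exists_functional {M : Type w₂} [AddCommGroup M] [Module k M]
    (N : Submodule k M) (v : M) (hv : v ∉ N) :
    ∃ f : M →ₗ[k] k, f v = 1 ∧ ∀ w ∈ N, f w = 0 := by
  have hvq : N.mkQ v ≠ 0 := by
    simpa [Submodule.mkQ_apply, Submodule.Quotient.mk_eq_zero] using hv
  obtain ⟨φ, hφ⟩ : ∃ φ : Module.Dual k (M ⧸ N), φ (N.mkQ v) ≠ 0 := by
    by_contra hcon
    push_neg at hcon
    exact hvq ((Module.forall_dual_apply_eq_zero_iff k _).1 hcon)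
  refine ⟨(φ (N.mkQ v))⁻¹ • φ.comp N.mkQ, ?_, ?_⟩
  · simp only [LinearMap.smul_apply, LinearMap.comp_apply, smul_eq_mul]
    exact inv_mul_cancel₀ hφ
  · intro w hw
    have : N.mkQ w = 0 := by simpa [Submodule.Quotient.mk_eq_zero] using hw
    simp [this]

/-- A functional taking value 1 on `u` splits off the line spanned by `u`. -/
lemma isCompl_span_ker {M : Type w₂} [AddCommGroup M] [Module k M]
    (f : M →ₗ[k] k) (u : M) (h : f u = 1) :
    IsCompl (Submodule.span k {u}) (LinearMap.ker f) := by
  constructor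
  · rw [disjoint_iff]
    ext x
    simp only [Submodule.mem_inf, Submodule.mem_bot]
    constructor
    · rintro ⟨hx1, hx2⟩
      obtain ⟨c, rfl⟩ := Submodule.mem_span_singleton.1 hx1
      have : c * f u = 0 := by simpa using hx2
      rw [h, mul_one] at this
      simp [this]
    · rintro rfl
      exact ⟨Submodule.zero_mem _, Submodule.zero_mem _⟩
  · rw [codisjoint_iff, eq_top_iff]
    intro x _
    have hmem : x - f x • u ∈ LinearMap.ker f := by
      simp [LinearMap.mem_ker, h, mul_comm]
    have : x = f x • u + (x - f x • u) := by abel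
    rw [this]
    exact Submodule.add_mem_sup (Submodule.smul_mem _ _ (Submodule.mem_span_singleton_self u)) hmem

end IntervalAux
end AuxiliaryLemmas

set_option maxHeartbeats 1600000 in
/-- Every nonzero pointwise finite dimensional persistence module over a totally
ordered set has a direct summand which is an interval module. -/
theorem exists_interval_summand_of_linearOrder (P : Type v) [LinearOrder P]
    (V : PersMod.{u, v, w} k P) (hfd : ∀ x : P, FiniteDimensional k (V.space x))
    (hV : ∃ (x : P) (v : V.space x), v ≠ 0) :
    ∃ U W : PersSubmod k V, (∀ x : P, IsCompl (U.carrier x) (W.carrier x)) ∧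
      IsIntervalModule k U.toPersMod := by
  classical
  obtain ⟨x₀, v₀, hv₀⟩ := hV
  haveI hfdD := hfd x₀
  -- the chains of kernels and images in `D = V.space x₀`
  set 𝒦 : Set (Submodule k (V.space x₀)) :=
    {K | ∃ z : P, ∃ hz : x₀ ≤ z, K = LinearMap.ker (V.map hz)} with h𝒦
  set 𝒜 : Set (Submodule k (V.space x₀)) :=
    {A | ∃ y : P, ∃ hy : y ≤ x₀, A = LinearMap.range (V.map hy)} with h𝒜
  have hmapcomp : ∀ {a b c : P} (hab : a ≤ b) (hbc : b ≤ c) (w : V.space a),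
      V.map hbc (V.map hab w) = V.map (hab.trans hbc) w := by
    intro a b c hab hbc w
    exact LinearMap.congr_fun (V.map_comp hab hbc) w
  have hmapid : ∀ (x : P) (h : x ≤ x) (w : V.space x), V.map h w = w := by
    intro x h w
    exact LinearMap.congr_fun (V.map_id x) w
  have hker_mono : ∀ {z z' : P} (hz : x₀ ≤ z) (hz' : x₀ ≤ z'), z ≤ z' →
      LinearMap.ker (V.map hz) ≤ LinearMap.ker (V.map hz') := by
    intro z z' hz hz' h w hw
    rw [LinearMap.mem_ker] at hw ⊢
    have := hmapcomp hz h w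
    rw [hw, map_zero] at this
    exact this.symm
  have hrange_mono : ∀ {y y' : P} (hy : y ≤ x₀) (hy' : y' ≤ x₀), y ≤ y' →
      LinearMap.range (V.map hy) ≤ LinearMap.range (V.map hy') := by
    intro y y' hy hy' h w hw
    obtain ⟨t, rfl⟩ := hw
    exact ⟨V.map h t, hmapcomp h hy' t⟩
  have h𝒦chain : ∀ K ∈ 𝒦, ∀ K' ∈ 𝒦, K ≤ K' ∨ K' ≤ K := by
    rintro K ⟨z, hz, rfl⟩ K' ⟨z', hz', rfl⟩
    rcases le_total z z' with h | h
    · exact Or.inl (hker_mono hz hz' h)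
    · exact Or.inr (hker_mono hz' hz h)
  have h𝒜chain : ∀ A ∈ 𝒜, ∀ A' ∈ 𝒜, A ≤ A' ∨ A' ≤ A := by
    rintro A ⟨y, hy, rfl⟩ A' ⟨y', hy', rfl⟩
    rcases le_total y y' with h | h
    · exact Or.inl (hrange_mono hy hy' h)
    · exact Or.inr (hrange_mono hy' hy h)
  have hbot𝒦 : (⊥ : Submodule k (V.space x₀)) ∈ 𝒦 := by
    refine ⟨x₀, le_refl x₀, ?_⟩
    rw [V.map_id]
    exact LinearMap.ker_id.symm
  -- the "largest kernel avoiding v"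
  have hκ : ∀ v : V.space x₀, v ≠ 0 → ∃ K, (K ∈ 𝒦 ∧ v ∉ K) ∧
      ∀ K' ∈ 𝒦, v ∉ K' → K' ≤ K := by
    intro v hv
    haveI : IsNoetherian k (V.space x₀) := inferInstance
    have hwf : WellFoundedGT (Submodule k (V.space x₀)) := inferInstance
    obtain ⟨K, hK, hmax⟩ := hwf.wf.has_min {K | K ∈ 𝒦 ∧ v ∉ K}
      ⟨⊥, hbot𝒦, by simpa using hv⟩
    refine ⟨K, hK, fun K' hK' hvK' => ?_⟩
    rcases h𝒦chain K hK.1 K' hK' with h | h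
    · rcases lt_or_eq_of_le h with hlt | he
      · exact absurd hlt (hmax K' ⟨hK', hvK'⟩)
      · exact le_of_eq he.symm
    · exact h
  choose κ hκspec hκmax using hκ
  -- the "largest image avoiding v" (or ⊥ if none)
  have hα : ∀ v : V.space x₀, v ≠ 0 → ∃ N : Submodule k (V.space x₀),
      ((N ∈ 𝒜 ∧ v ∉ N) ∨ N = ⊥) ∧ ∀ A ∈ 𝒜, v ∉ A → A ≤ N := by
    intro v hv
    by_cases hne : ∃ A ∈ 𝒜, v ∉ A
    · haveI : IsNoetherian k (V.space x₀) := inferInstance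
      have hwf : WellFoundedGT (Submodule k (V.space x₀)) := inferInstance
      obtain ⟨A₁, hA₁, hA₁'⟩ := hne
      obtain ⟨N, hN, hmax⟩ := hwf.wf.has_min {A | A ∈ 𝒜 ∧ v ∉ A} ⟨A₁, hA₁, hA₁'⟩
      refine ⟨N, Or.inl hN, fun A hA hvA => ?_⟩
      rcases h𝒜chain A hA N hN.1 with h | h
      · exact h
      · rcases lt_or_eq_of_le h with hlt | he
        · exact absurd hlt (hmax A ⟨hA, hvA⟩)
        · exact le_of_eq he.symm
    · push_neg at hne
      exact ⟨⊥, Or.inr rfl, fun A hA hvA => absurd (hne A hA) (by simp [hvA])⟩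
  choose α hαspec hαmax using hα
  have hαnotmem : ∀ (v : V.space x₀) (hv : v ≠ 0), v ∉ α v hv := by
    intro v hv
    rcases hαspec v hv with ⟨-, h⟩ | h
    · exact h
    · rw [h]
      simpa using hv
  -- optimization: pick `v` with maximal kernel then minimal image
  have hκvals : ∀ (v : V.space x₀) (hv : v ≠ 0), κ v hv ∈ 𝒦 := fun v hv => (hκspec v hv).1
  have hwfgt : WellFoundedGT (Submodule k (V.space x₀)) := inferInstance
  obtain ⟨Kst, ⟨v₁, hv₁, hκv₁⟩, hKstmax⟩ := hwfgt.wf.has_min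
    {K | ∃ (v : V.space x₀) (hv : v ≠ 0), κ v hv = K} ⟨κ v₀ hv₀, v₀, hv₀, rfl⟩
  have hκle : ∀ (v : V.space x₀) (hv : v ≠ 0), κ v hv ≤ Kst := by
    intro v hv
    rcases h𝒦chain _ (hκvals v hv) _ (hκv₁ ▸ hκvals v₁ hv₁) with h | h
    · exact h
    · rcases lt_or_eq_of_le h with hlt | he
      · exact absurd hlt (hKstmax _ ⟨v, hv, rfl⟩)
      · exact le_of_eq he.symm
  have hwflt : WellFoundedLT (Submodule k (V.space x₀)) := inferInstance
  obtain ⟨Ast, ⟨v₂, hv₂, hκv₂, hαv₂⟩, hAstmin⟩ := hwflt.wf.has_min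
    {A | ∃ (v : V.space x₀) (hv : v ≠ 0), κ v hv = Kst ∧ α v hv = A}
    ⟨α v₁ hv₁, v₁, hv₁, hκv₁, rfl⟩
  -- the key claim : v₂ avoids κ ⊔ α
  have hkey : v₂ ∉ Kst ⊔ Ast := by
    intro hmem
    obtain ⟨kk, hkk, aa, haa, hsum⟩ := Submodule.mem_sup.1 hmem
    have ha0 : aa ≠ 0 := by
      rintro rfl
      rw [add_zero] at hsum
      rw [← hκv₂] at hkk
      exact (hκspec v₂ hv₂).2 (hsum ▸ hkk)
    have haκ : aa ∉ Kst := by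
      intro h
      have : v₂ ∈ Kst := by
        rw [← hsum]
        exact Submodule.add_mem _ hkk h
      rw [← hκv₂] at this
      exact (hκspec v₂ hv₂).2 this
    -- κ aa = Kst
    have hκaa : κ aa ha0 = Kst := by
      refine le_antisymm (hκle aa ha0) ?_
      rw [← hκv₂]
      exact hκmax aa ha0 _ (hκv₂ ▸ hκvals v₂ hv₂) (hκv₂ ▸ haκ)
    -- α aa < Ast
    have hAst𝒜 : Ast ∈ 𝒜 := by
      rcases hαspec v₂ hv₂ with ⟨h, -⟩ | h
      · exact hαv₂ ▸ h
      · exfalso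
        rw [h] at hαv₂
        rw [← hαv₂] at haa
        rw [Submodule.mem_bot] at haa
        exact ha0 haa
    have hαlt : α aa ha0 < Ast := by
      have hsubset : ∀ A ∈ 𝒜, aa ∉ A → A < Ast := by
        intro A hA haaA
        rcases h𝒜chain A hA Ast hAst𝒜 with h | h
        · rcases lt_or_eq_of_le h with hlt | he
          · exact hlt
          · exact absurd (he ▸ haa) haaA
        · exact absurd (h haa) haaA
      rcases hαspec aa ha0 with ⟨h1, h2⟩ | h1
      · exact hsubset _ h1 h2
      · rw [h1]
        rcases eq_bot_or_bot_lt Ast with hb | hb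
        · exfalso
          rw [hb, Submodule.mem_bot] at haa
          exact ha0 haa
        · exact hb
    exact hAstmin (α aa ha0) ⟨aa, ha0, hκaa, rfl⟩ hαlt
  -- rename : v is the chosen vector
  set v : V.space x₀ := v₂ with hvdef
  have hvne : v ≠ 0 := hv₂
  set N : Submodule k (V.space x₀) := Kst ⊔ Ast with hNdef
  have hkerN : ∀ {z : P} (hz : x₀ ≤ z), V.map hz v ≠ 0 →
      LinearMap.ker (V.map hz) ≤ N := by
    intro z hz hnz
    have h1 : v ∉ LinearMap.ker (V.map hz) := by
      rw [LinearMap.mem_ker]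
      exact hnz
    have := hκmax v hvne _ ⟨z, hz, rfl⟩ h1
    rw [hκv₂] at this
    exact this.trans le_sup_left
  have hrangeN : ∀ {y : P} (hy : y ≤ x₀), v ∉ LinearMap.range (V.map hy) →
      LinearMap.range (V.map hy) ≤ N := by
    intro y hy hnr
    have := hαmax v hvne _ ⟨y, hy, rfl⟩ hnr
    rw [hαv₂] at this
    exact this.trans le_sup_right
  obtain ⟨f, hfv, hfN⟩ := IntervalAux.exists_functional N v hkey
  -- the interval
  set L : Set P := {y | ∃ h : y ≤ x₀, v ∈ LinearMap.range (V.map h)} with hLdef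
  set R : Set P := {z | ∃ h : x₀ ≤ z, V.map h v ≠ 0} with hRdef
  set I : Set P := L ∪ R with hIdef
  have hx₀L : x₀ ∈ L := ⟨le_refl x₀, ⟨v, hmapid x₀ _ v⟩⟩
  have hx₀R : x₀ ∈ R := ⟨le_refl x₀, by rw [hmapid x₀ _ v]; exact hvne⟩
  have hLle : ∀ y ∈ L, y ≤ x₀ := fun y hy => hy.choose
  have hRge : ∀ z ∈ R, x₀ ≤ z := fun z hz => hz.choose
  have hLmem : ∀ (y : P) (h : y ≤ x₀), y ∈ L → v ∈ LinearMap.range (V.map h) := by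
    intro y h hy
    obtain ⟨h', hv'⟩ := hy
    exact hv'
  have hRmem : ∀ (z : P) (h : x₀ ≤ z), z ∈ R → V.map h v ≠ 0 := by
    intro z h hz
    obtain ⟨h', hv'⟩ := hz
    exact hv'
  have hLup : ∀ y ∈ L, ∀ y' : P, y ≤ y' → y' ≤ x₀ → y' ∈ L := by
    intro y hy y' h h'
    exact ⟨h', hrange_mono (hLle y hy) h' h (hLmem y (hLle y hy) hy)⟩
  have hRdown : ∀ z ∈ R, ∀ z' : P, x₀ ≤ z' → z' ≤ z → z' ∈ R := by
    intro z hz z' h h'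
    refine ⟨h, fun h0 => hRmem z (hRge z hz) hz ?_⟩
    rw [← hmapcomp h h' v, h0, map_zero]
  have hnotR : ∀ (z : P) (h : x₀ ≤ z), z ∉ R → V.map h v = 0 := by
    intro z h hz
    by_contra h0
    exact hz ⟨h, h0⟩
  have hnotL : ∀ (y : P) (h : y ≤ x₀), y ∉ L → v ∉ LinearMap.range (V.map h) := by
    intro y h hy h0
    exact hy ⟨h, h0⟩
  have hIconv : IsConvexIn I := by
    rintro a b c ha hc hab hbc
    rcases le_total b x₀ with hb | hb
    · left
      rcases ha with haL | haR
      · exact hLup a haL b hab hb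
      · have : x₀ ≤ b := (hRge a haR).trans hab
        have hbe : b = x₀ := le_antisymm hb this
        rw [hbe]
        exact hx₀L
    · right
      rcases hc with hcL | hcR
      · have : b ≤ x₀ := hbc.trans (hLle c hcL)
        have hbe : b = x₀ := le_antisymm this hb
        rw [hbe]
        exact hx₀R
      · exact hRdown c hcR b hb hbc
  have hIint : IsPosetInterval I := by
    refine ⟨⟨x₀, Or.inl hx₀L⟩, hIconv, ?_⟩
    intro a ha c hc
    refine ⟨1, fun i => if i = 0 then a else c, ?_, by simp, by simp, ?_⟩
    · intro i hi
      by_cases h : i = 0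
      · simpa [h] using ha
      · simpa [h] using hc
    · intro i hi
      have : i = 0 := by omega
      subst this
      simpa using le_total a c
  -- coherent family of lifts on L
  haveI hfdL : ∀ q : (↥L)ᵒᵈ, FiniteDimensional k (V.space ((OrderDual.ofDual q : ↥L) : P)) :=
    fun q => hfd _
  have uexists : ∃ u : ∀ y : P, y ∈ L → V.space y,
      (∀ (y : P) (hy : y ∈ L) (h : y ≤ x₀), V.map h (u y hy) = v) ∧
      (∀ (y y' : P) (hy : y ∈ L) (hy' : y' ∈ L) (h : y ≤ y'),
        V.map h (u y hy) = u y' hy') := by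
    set EL : (↥L)ᵒᵈ → Type _ := fun q => V.space ((OrderDual.ofDual q : ↥L) : P) with hEL
    set TL : ∀ a b : (↥L)ᵒᵈ, a ≤ b → (EL b →ₗ[k] EL a) := fun a b h =>
      V.map (show ((OrderDual.ofDual b : ↥L) : P) ≤ ((OrderDual.ofDual a : ↥L) : P) from h)
      with hTL
    set FL : ∀ q : (↥L)ᵒᵈ, AffineSubspace k (EL q) := fun q =>
      AffineSubspace.comap (V.map (hLle _ (OrderDual.ofDual q : ↥L).2)).toAffineMap
        (AffineSubspace.mk' v ⊥) with hFL
    have hFLmem : ∀ (q : (↥L)ᵒᵈ) (x : EL q),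
        x ∈ FL q ↔ V.map (hLle _ (OrderDual.ofDual q : ↥L).2) x = v := by
      intro q x
      rw [hFL]
      rw [AffineSubspace.mem_comap]
      exact IntervalAux.mem_mk'_bot v _
    obtain ⟨sL, hsLmem, hsLcoh⟩ := IntervalAux.invLimit (k := k) (Q := (↥L)ᵒᵈ) EL TL
      (fun q x => hmapid _ _ x)
      (fun a b c hab hbc x => hmapcomp _ _ x)
      FL
      (by
        intro q
        obtain ⟨t, ht⟩ := hLmem _ (hLle _ (OrderDual.ofDual q : ↥L).2)
          (OrderDual.ofDual q : ↥L).2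
        exact ⟨t, (hFLmem q t).2 ht⟩)
      (by
        intro a b h x hx
        rw [hFLmem] at hx
        rw [hFLmem]
        show V.map _ (V.map _ x) = v
        rw [hmapcomp]
        exact hx)
    refine ⟨fun y hy => sL (OrderDual.toDual ⟨y, hy⟩), ?_, ?_⟩
    · intro y hy h
      exact (hFLmem (OrderDual.toDual ⟨y, hy⟩) _).1 (hsLmem (OrderDual.toDual ⟨y, hy⟩))
    · intro y y' hy hy' h
      exact hsLcoh (OrderDual.toDual ⟨y', hy'⟩) (OrderDual.toDual ⟨y, hy⟩) h
  obtain ⟨u, ufib, ucoh⟩ := uexists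
  -- coherent family of functionals on R
  haveI hfdR : ∀ q : ↥R, FiniteDimensional k (Module.Dual k (V.space (q : P))) :=
    fun q => by haveI := hfd (q : P); infer_instance
  have gexists : ∃ g : ∀ z : P, z ∈ R → Module.Dual k (V.space z),
      (∀ (z : P) (hz : z ∈ R) (h : x₀ ≤ z), (g z hz).comp (V.map h) = f) ∧
      (∀ (z z' : P) (hz : z ∈ R) (hz' : z' ∈ R) (h : z ≤ z'),
        (g z' hz').comp (V.map h) = g z hz) := by
    set ER : ↥R → Type _ := fun q => Module.Dual k (V.space (q : P)) with hER
    set TR : ∀ a b : ↥R, a ≤ b → (ER b →ₗ[k] ER a) := fun a b h =>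
      (V.map (show ((a : ↥R) : P) ≤ ((b : ↥R) : P) from h)).dualMap with hTR
    set FR : ∀ q : ↥R, AffineSubspace k (ER q) := fun q =>
      AffineSubspace.comap ((V.map (hRge _ (q : ↥R).2)).dualMap).toAffineMap
        (AffineSubspace.mk' f ⊥) with hFR
    have hFRmem : ∀ (q : ↥R) (g : ER q),
        g ∈ FR q ↔ g.comp (V.map (hRge _ (q : ↥R).2)) = f := by
      intro q g
      rw [hFR]
      rw [AffineSubspace.mem_comap]
      exact IntervalAux.mem_mk'_bot f _
    obtain ⟨sR, hsRmem, hsRcoh⟩ := IntervalAux.invLimit (k := k) (Q := ↥R) ER TR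
      (by
        intro q x
        show (V.map _).dualMap x = x
        ext w
        rw [LinearMap.dualMap_apply]
        rw [hmapid])
      (by
        intro a b c hab hbc x
        show (V.map _).dualMap ((V.map _).dualMap x) = (V.map _).dualMap x
        ext w
        simp only [LinearMap.dualMap_apply]
        rw [hmapcomp])
      FR
      (by
        intro q
        have hker : ∀ w ∈ LinearMap.ker (V.map (hRge _ (q : ↥R).2)), f w = 0 := by
          intro w hw
          exact hfN w (hkerN (hRge _ (q : ↥R).2) (hRmem _ (hRge _ (q : ↥R).2) (q : ↥R).2) hw)
        obtain ⟨g, hg⟩ := IntervalAux.exists_comp_eq (V.map (hRge _ (q : ↥R).2)) f hker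
        exact ⟨g, (hFRmem q g).2 hg⟩)
      (by
        intro a b h g hg
        rw [hFRmem] at hg
        rw [hFRmem]
        show ((V.map _).dualMap g).comp (V.map _) = f
        rw [← hg]
        ext w
        simp only [LinearMap.comp_apply, LinearMap.dualMap_apply]
        rw [hmapcomp])
    refine ⟨fun z hz => sR ⟨z, hz⟩, ?_, ?_⟩
    · intro z hz h
      exact (hFRmem ⟨z, hz⟩ _).1 (hsRmem ⟨z, hz⟩)
    · intro z z' hz hz' h
      exact hsRcoh ⟨z, hz⟩ ⟨z', hz'⟩ h
  obtain ⟨g, gfib, gcoh⟩ := gexists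
  -- global section and cosection
  set uu : ∀ x : P, V.space x := fun x =>
    if hx : x ∈ L then u x hx else if hx' : x ∈ R then V.map hx'.choose v else 0 with huu
  set ff : ∀ x : P, Module.Dual k (V.space x) := fun x =>
    if hx : x ∈ R then g x hx else if hx' : x ∈ L then f.comp (V.map hx'.choose) else 0
    with hff
  have uuL : ∀ (x : P) (hx : x ∈ L), uu x = u x hx := by
    intro x hx
    simp only [huu]
    rw [dif_pos hx]
  have uux₀ : uu x₀ = v := by
    rw [uuL x₀ hx₀L]
    have := ufib x₀ hx₀L (le_refl x₀)
    rw [hmapid] at this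
    exact this
  have uuR : ∀ (x : P), x ∈ R → ∀ h : x₀ ≤ x, uu x = V.map h v := by
    intro x hx h
    by_cases hxL : x ∈ L
    · have hxe : x = x₀ := le_antisymm (hLle x hxL) h
      subst hxe
      rw [uux₀, hmapid]
    · simp only [huu]
      rw [dif_neg hxL, dif_pos hx]
  have uu0 : ∀ x : P, x ∉ I → uu x = 0 := by
    intro x hx
    rw [Set.mem_union] at hx
    push_neg at hx
    simp only [huu]
    rw [dif_neg hx.1, dif_neg hx.2]
  have uunz : ∀ x ∈ I, uu x ≠ 0 := by
    rintro x (hx | hx)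
    · rw [uuL x hx]
      intro h0
      have := ufib x hx (hLle x hx)
      rw [h0, map_zero] at this
      exact hvne this.symm
    · rw [uuR x hx (hRge x hx)]
      exact hRmem x (hRge x hx) hx
  have ffR : ∀ (x : P) (hx : x ∈ R), ff x = g x hx := by
    intro x hx
    simp only [hff]
    rw [dif_pos hx]
  have ffx₀ : ff x₀ = f := by
    rw [ffR x₀ hx₀R]
    have := gfib x₀ hx₀R (le_refl x₀)
    rw [← this]
    ext w
    simp only [LinearMap.comp_apply]
    rw [hmapid]
  have ffL : ∀ (x : P), x ∈ L → ∀ h : x ≤ x₀, ff x = f.comp (V.map h) := by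
    intro x hx h
    by_cases hxR : x ∈ R
    · have hxe : x = x₀ := le_antisymm h (hRge x hxR)
      subst hxe
      rw [ffx₀]
      ext w
      simp only [LinearMap.comp_apply]
      rw [hmapid]
    · simp only [hff]
      rw [dif_neg hxR, dif_pos hx]
  have ff0 : ∀ x : P, x ∉ I → ff x = 0 := by
    intro x hx
    rw [Set.mem_union] at hx
    push_neg at hx
    simp only [hff]
    rw [dif_neg hx.2, dif_neg hx.1]
  have hpair : ∀ x ∈ I, ff x (uu x) = 1 := by
    intro x hx
    by_cases hxR : x ∈ R
    · rw [ffR x hxR, uuR x hxR (hRge x hxR)]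
      have := gfib x hxR (hRge x hxR)
      have h2 := LinearMap.congr_fun this v
      rw [LinearMap.comp_apply] at h2
      rw [h2, hfv]
    · have hxL : x ∈ L := hx.resolve_right hxR
      rw [ffL x hxL (hLle x hxL), uuL x hxL]
      rw [LinearMap.comp_apply, ufib x hxL (hLle x hxL), hfv]
  -- the key structure lemmas
  have hmemL : ∀ x ∈ I, x ≤ x₀ → x ∈ L := by
    intro x hx h
    rcases hx with h1 | h1
    · exact h1
    · have : x = x₀ := le_antisymm h (hRge x h1)
      rw [this]; exact hx₀L
  have hmemR : ∀ x ∈ I, x₀ ≤ x → x ∈ R := by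
    intro x hx h
    rcases hx with h1 | h1
    · have : x = x₀ := le_antisymm (hLle x h1) h
      rw [this]; exact hx₀R
    · exact h1
  have KeyU1 : ∀ (x y : P) (h : x ≤ y), x ∈ I → y ∈ I → V.map h (uu x) = uu y := by
    intro x y h hx hy
    rcases le_total y x₀ with hyx₀ | hyx₀
    · have hxL : x ∈ L := hmemL x hx (h.trans hyx₀)
      have hyL : y ∈ L := hmemL y hy hyx₀
      rw [uuL x hxL, uuL y hyL]
      exact ucoh x y hxL hyL h
    · have hyR : y ∈ R := hmemR y hy hyx₀
      rcases le_total x x₀ with hxx₀ | hxx₀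
      · have hxL : x ∈ L := hmemL x hx hxx₀
        rw [uuL x hxL, uuR y hyR (hyx₀)]
        have h1 : V.map hyx₀ (V.map hxx₀ (u x hxL)) = V.map (hxx₀.trans hyx₀) (u x hxL) :=
          hmapcomp _ _ _
        rw [ufib x hxL hxx₀] at h1
        have h2 : V.map (hxx₀.trans hyx₀) (u x hxL) = V.map h (u x hxL) := rfl
        rw [← h2, ← h1]
      · have hxR : x ∈ R := hmemR x hx hxx₀
        rw [uuR x hxR hxx₀, uuR y hyR hyx₀]
        have h1 : V.map h (V.map hxx₀ v) = V.map (hxx₀.trans h) v := hmapcomp _ _ _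
        rw [h1]
  have KeyU0 : ∀ (x y : P) (h : x ≤ y), y ∉ I → V.map h (uu x) = 0 := by
    intro x y h hy
    by_cases hx : x ∈ I
    · have hyR : y ∉ R := fun h' => hy (Or.inr h')
      have hx₀y : x₀ ≤ y := by
        rcases le_total y x₀ with h1 | h1
        · exfalso
          rcases hx with hxL | hxR
          · exact hy (Or.inl (hLup x hxL y h h1))
          · have : x = y := le_antisymm h (h1.trans (hRge x hxR))
            rw [← this] at hy
            exact hy (Or.inr hxR)
        · exact h1
      have hdead : V.map hx₀y v = 0 := hnotR y hx₀y hyR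
      rcases le_total x x₀ with hxx₀ | hxx₀
      · have hxL : x ∈ L := hmemL x hx hxx₀
        rw [uuL x hxL]
        have h1 : V.map hx₀y (V.map hxx₀ (u x hxL)) = V.map (hxx₀.trans hx₀y) (u x hxL) :=
          hmapcomp _ _ _
        rw [ufib x hxL hxx₀, hdead] at h1
        have h2 : V.map (hxx₀.trans hx₀y) (u x hxL) = V.map h (u x hxL) := rfl
        rw [← h2, ← h1]
      · have hxR : x ∈ R := hmemR x hx hxx₀
        rw [uuR x hxR hxx₀]
        have h1 : V.map h (V.map hxx₀ v) = V.map (hxx₀.trans h) v := hmapcomp _ _ _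
        rw [h1]
        have h2 : V.map (hxx₀.trans h) v = V.map hx₀y v := rfl
        rw [h2, hdead]
    · rw [uu0 x hx, map_zero]
  have KeyF1 : ∀ (x y : P) (h : x ≤ y), x ∈ I → y ∈ I →
      (ff y).comp (V.map h) = ff x := by
    intro x y h hx hy
    rcases le_total y x₀ with hyx₀ | hyx₀
    · have hxL : x ∈ L := hmemL x hx (h.trans hyx₀)
      have hyL : y ∈ L := hmemL y hy hyx₀
      rw [ffL y hyL hyx₀, ffL x hxL (h.trans hyx₀)]
      ext w
      simp only [LinearMap.comp_apply]
      rw [hmapcomp]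
    · have hyR : y ∈ R := hmemR y hy hyx₀
      rw [ffR y hyR]
      rcases le_total x x₀ with hxx₀ | hxx₀
      · have hxL : x ∈ L := hmemL x hx hxx₀
        rw [ffL x hxL hxx₀]
        have h1 := gfib y hyR hyx₀
        ext w
        simp only [LinearMap.comp_apply]
        have h2 : V.map h w = V.map (hxx₀.trans hyx₀) w := rfl
        rw [h2, ← hmapcomp hxx₀ hyx₀ w]
        have h3 := LinearMap.congr_fun h1 (V.map hxx₀ w)
        rw [LinearMap.comp_apply] at h3
        rw [h3]
      · have hxR : x ∈ R := hmemR x hx hxx₀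
        rw [ffR x hxR]
        exact gcoh x y hxR hyR h
  have KeyF0 : ∀ (x y : P) (h : x ≤ y), x ∉ I → y ∈ I →
      (ff y).comp (V.map h) = 0 := by
    intro x y h hx hy
    have hxx₀ : x ≤ x₀ := by
      rcases le_total x x₀ with h1 | h1
      · exact h1
      · exact absurd (hIconv (Or.inl hx₀L) hy h1 h) hx
    have hxL : x ∉ L := fun h' => hx (Or.inl h')
    have hrange : v ∉ LinearMap.range (V.map hxx₀) := hnotL x hxx₀ hxL
    have hkill : f.comp (V.map hxx₀) = 0 := by
      ext w
      simp only [LinearMap.comp_apply, LinearMap.zero_apply]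
      exact hfN _ (hrangeN hxx₀ hrange ⟨w, rfl⟩)
    rcases le_total y x₀ with hyx₀ | hyx₀
    · have hyL : y ∈ L := hmemL y hy hyx₀
      rw [ffL y hyL hyx₀]
      ext w
      simp only [LinearMap.comp_apply, LinearMap.zero_apply]
      rw [hmapcomp]
      have h2 : V.map (h.trans hyx₀) w = V.map hxx₀ w := rfl
      rw [h2]
      exact LinearMap.congr_fun hkill w
    · have hyR : y ∈ R := hmemR y hy hyx₀
      rw [ffR y hyR]
      ext w
      simp only [LinearMap.comp_apply, LinearMap.zero_apply]
      have h2 : V.map h w = V.map (hxx₀.trans hyx₀) w := rfl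
      rw [h2, ← hmapcomp hxx₀ hyx₀ w]
      have h3 := LinearMap.congr_fun (gfib y hyR hyx₀) (V.map hxx₀ w)
      rw [LinearMap.comp_apply] at h3
      rw [h3]
      exact LinearMap.congr_fun hkill w
  -- the two submodules
  have mapleU : ∀ {x y : P} (h : x ≤ y), ∀ w ∈ Submodule.span k {uu x},
      V.map h w ∈ Submodule.span k {uu y} := by
    intro x y h w hw
    obtain ⟨c, rfl⟩ := Submodule.mem_span_singleton.1 hw
    rw [map_smul]
    by_cases hy : y ∈ I
    · by_cases hx : x ∈ I
      · rw [KeyU1 x y h hx hy]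
        exact Submodule.smul_mem _ _ (Submodule.mem_span_singleton_self _)
      · rw [uu0 x hx, map_zero, smul_zero]
        exact Submodule.zero_mem _
    · rw [KeyU0 x y h hy, smul_zero]
      exact Submodule.zero_mem _
  have mapleW : ∀ {x y : P} (h : x ≤ y), ∀ w ∈ LinearMap.ker (ff x),
      V.map h w ∈ LinearMap.ker (ff y) := by
    intro x y h w hw
    rw [LinearMap.mem_ker] at hw ⊢
    by_cases hy : y ∈ I
    · by_cases hx : x ∈ I
      · have := LinearMap.congr_fun (KeyF1 x y h hx hy) w
        rw [LinearMap.comp_apply] at this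
        rw [this, hw]
      · have := LinearMap.congr_fun (KeyF0 x y h hx hy) w
        rw [LinearMap.comp_apply] at this
        rw [this]
        rfl
    · rw [ff0 y hy]
      rfl
  set UU : PersSubmod k V := ⟨fun x => Submodule.span k {uu x}, mapleU⟩ with hUU
  set WW : PersSubmod k V := ⟨fun x => LinearMap.ker (ff x), mapleW⟩ with hWW
  have hcompl : ∀ x : P, IsCompl (UU.carrier x) (WW.carrier x) := by
    intro x
    show IsCompl (Submodule.span k {uu x}) (LinearMap.ker (ff x))
    by_cases hx : x ∈ I
    · exact IntervalAux.isCompl_span_ker (ff x) (uu x) (hpair x hx)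
    · rw [uu0 x hx, ff0 x hx, Submodule.span_zero_singleton, LinearMap.ker_zero]
      exact isCompl_bot_top
  refine ⟨UU, WW, hcompl, ?_⟩
  -- `UU` is an interval module
  refine ⟨I, hIint, ⟨?_⟩⟩
  have hAAmem : ∀ (x : P) (c : ↥(Submodule.span k {uu x})),
      ((ff x).comp (Submodule.span k {uu x}).subtype) c ∈ constSub k I x := by
    intro x c
    by_cases hx : x ∈ I
    · simp [constSub, hx]
    · simp only [constSub, if_neg hx, Submodule.mem_bot, LinearMap.comp_apply,
        Submodule.subtype_apply]
      rw [ff0 x hx]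
      rfl
  set AA : ∀ x : P, ↥(Submodule.span k {uu x}) →ₗ[k] ↥(constSub k I x) := fun x =>
    LinearMap.codRestrict (constSub k I x) ((ff x).comp (Submodule.span k {uu x}).subtype)
      (hAAmem x) with hAA
  have hAAval : ∀ (x : P) (w : ↥(Submodule.span k {uu x})),
      ((AA x w : ↥(constSub k I x)) : k) = ff x (w : V.space x) := fun x w => rfl
  have hAAbij : ∀ x : P, Function.Bijective (AA x) := by
    intro x
    constructor
    · intro w w' hww
      have hval : ff x (w : V.space x) = ff x (w' : V.space x) := by
        rw [← hAAval x w, ← hAAval x w', hww]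
      by_cases hx : x ∈ I
      · obtain ⟨c, hc⟩ := Submodule.mem_span_singleton.1 w.2
        obtain ⟨c', hc'⟩ := Submodule.mem_span_singleton.1 w'.2
        have h1 : ff x (w : V.space x) = c := by
          rw [← hc, map_smul, hpair x hx, smul_eq_mul, mul_one]
        have h2 : ff x (w' : V.space x) = c' := by
          rw [← hc', map_smul, hpair x hx, smul_eq_mul, mul_one]
        apply Subtype.ext
        rw [← hc, ← hc']
        rw [h1, h2] at hval
        rw [hval]
      · apply Subtype.ext
        have hz : ∀ t : ↥(Submodule.span k {uu x}), (t : V.space x) = 0 := by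
          intro t
          obtain ⟨c, hc⟩ := Submodule.mem_span_singleton.1 t.2
          rw [← hc, uu0 x hx, smul_zero]
        rw [hz w, hz w']
    · intro c
      by_cases hx : x ∈ I
      · refine ⟨⟨(c : k) • uu x,
          Submodule.smul_mem _ _ (Submodule.mem_span_singleton_self _)⟩, ?_⟩
        apply Subtype.ext
        rw [hAAval]
        show ff x ((c : k) • uu x) = (c : k)
        rw [map_smul, hpair x hx, smul_eq_mul, mul_one]
      · refine ⟨0, ?_⟩
        apply Subtype.ext
        rw [hAAval]
        have hc : (c : k) = 0 := by
          have h2 := c.2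
          simp only [constSub, if_neg hx, Submodule.mem_bot] at h2
          exact h2
        rw [hc]
        simp
  refine ⟨fun x => LinearEquiv.ofBijective (AA x) (hAAbij x), ?_⟩
  intro x y h
  show ∀ w' : ↥(Submodule.span k {uu x}),
    (LinearEquiv.ofBijective (AA y) (hAAbij y)) (((PersSubmod.toPersMod k UU)).map h w')
      = (constMod k I hIint.2.1).map h ((LinearEquiv.ofBijective (AA x) (hAAbij x)) w')
  intro w'
  apply Subtype.ext
  show (((LinearEquiv.ofBijective (AA y) (hAAbij y))
      (((PersSubmod.toPersMod k UU).map h) w') : ↥(constSub k I y)) : k)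
    = ((constMap k I x y ((LinearEquiv.ofBijective (AA x) (hAAbij x)) w') :
      ↥(constSub k I y)) : k)
  have hstep : (((LinearEquiv.ofBijective (AA y) (hAAbij y))
      (((PersSubmod.toPersMod k UU).map h) w') :
      ↥(constSub k I y)) : k) = ff y (V.map h (w' : V.space x)) := rfl
  rw [hstep]
  have hstep2 : ((constMap k I x y
      ((LinearEquiv.ofBijective (AA x) (hAAbij x)) w') : ↥(constSub k I y)) : k) =
      if y ∈ I then ff x (w' : V.space x) else 0 := by
    show ((@ite _ (y ∈ I) (Classical.propDecidable _) (LinearMap.id : k →ₗ[k] k) 0)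
      (((LinearEquiv.ofBijective (AA x) (hAAbij x)) w' : ↥(constSub k I x)) : k)) = _
    by_cases hy : y ∈ I
    · rw [if_pos hy, if_pos hy]
      rfl
    · rw [if_neg hy, if_neg hy]
      rfl
  rw [hstep2]
  by_cases hy : y ∈ I
  · rw [if_pos hy]
    by_cases hx : x ∈ I
    · have := LinearMap.congr_fun (KeyF1 x y h hx hy) (w' : V.space x)
      rw [LinearMap.comp_apply] at this
      exact this
    · have hz : (w' : V.space x) = 0 := by
        obtain ⟨c, hc⟩ := Submodule.mem_span_singleton.1 w'.2
        rw [← hc, uu0 x hx, smul_zero]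
      rw [hz, map_zero, map_zero, map_zero]
  · rw [if_neg hy, ff0 y hy]
    rfl
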